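/- For every ε with 0 ≤ ε < 1, the function u(θ,φ) = sin θ · cos φ satisfies Δ₁ u = (-2 + 2ε²)·u exactly (with no order-ε⁴ remainder) at every point (θ,φ) with 0 < θ < π and φ ∈ ℝ. -/

import Mathlib

open Real

/-- The truncated (first order in `ε²`) Finslerian Laplace operator, acting on a function
`u : ℝ → ℝ → ℝ` of the angular variables `(θ, φ)`. -/
noncomputable def truncLaplacian (ε : ℝ) (u : ℝ → ℝ → ℝ) (θ φ : ℝ) : ℝ :=
  ((4 - 5 * ε ^ 2 * sin θ ^ 2) / (4 * sin θ ^ 2)) * deriv (deriv (u θ)) φ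
  + (1 - 3 / 4 * ε ^ 2 * sin θ ^ 2) * deriv (deriv (fun t => u t φ)) θ
  + (cos θ / sin θ) * (1 + 3 / 4 * ε ^ 2 * sin θ ^ 2) * deriv (fun t => u t φ) θ

/-- `sin θ · cos φ` satisfies `Δ₁ u = (-2 + 2ε²)·u` exactly, for every `0 ≤ ε < 1`. -/
theorem truncLaplacian_sin_cos_eigen (ε : ℝ) (hε0 : 0 ≤ ε) (hε1 : ε < 1)
    (θ φ : ℝ) (hθ0 : 0 < θ) (hθπ : θ < Real.pi) :
    truncLaplacian ε (fun θ' φ' => Real.sin θ' * Real.cos φ') θ φ =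
      (-2 + 2 * ε ^ 2) * (Real.sin θ * Real.cos φ) := by
  have hs : Real.sin θ ≠ 0 := ne_of_gt (Real.sin_pos_of_pos_of_lt_pi hθ0 hθπ)
  have h1 : deriv (fun φ' => Real.sin θ * Real.cos φ') = fun φ' => Real.sin θ * (-Real.sin φ') := by
    funext x
    simp [deriv_const_mul_field]
  have h2 : deriv (fun t => Real.sin t * Real.cos φ) = fun t => Real.cos t * Real.cos φ := by
    funext x
    simp [deriv_mul_const_field]
  unfold truncLaplacian
  simp only [h1, h2]
  have h3 : deriv (fun x => Real.sin θ * (-Real.sin x)) φ = Real.sin θ * (-Real.cos φ) := by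
    simp [deriv_const_mul_field]
  have h4 : deriv (fun t => Real.cos t * Real.cos φ) θ = -Real.sin θ * Real.cos φ := by
    simp [deriv_mul_const_field]
  rw [h3, h4]
  have hc : Real.cos θ ^ 2 = 1 - Real.sin θ ^ 2 := by
    have := Real.sin_sq_add_cos_sq θ; linarith
  field_simp
  linear_combination (3 * ε^2 * Real.sin θ^2 * Real.cos φ + 4 * Real.cos φ) * Real.sin_sq_add_cos_sq θ
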